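/- Assume the symmetric unisolvent setup: B = {f_1,…,f_N} is a linearly independent symmetric set of functions, F = span(B), P = {a_1,…,a_N} is a symmetric set of N points, and the interpolation problem is unisolvent. Then for every subgroup H of S_n, the number of H-orbits of the set B (under the restricted action σ • f = f ∘ (σ⁻¹ •)) equals the number of H-orbits of the set P (under the restricted coordinate-permutation action). -/

import Mathlib

/-- The action of `S_n` on `ℝ^n` by permuting coordinates: `σ • x = x ∘ σ⁻¹`. -/
def psmul {n : ℕ} (σ : Equiv.Perm (Fin n)) (x : Fin n → ℝ) : Fin n → ℝ := x ∘ ⇑σ⁻¹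

/-- The action of `S_n` on functions `ℝ^n → ℝ`: `(σ • f)(x) = f(σ⁻¹ • x)`. -/
def fsmul {n : ℕ} (σ : Equiv.Perm (Fin n)) (f : (Fin n → ℝ) → ℝ) : (Fin n → ℝ) → ℝ :=
  fun x => f (psmul σ⁻¹ x)

/-- The orbit of a point `x ∈ ℝ^n` under a subgroup `H ≤ S_n`. -/
def porbitUnder {n : ℕ} (H : Subgroup (Equiv.Perm (Fin n))) (x : Fin n → ℝ) :
    Set (Fin n → ℝ) := {y | ∃ σ ∈ H, psmul σ x = y}

/-- The orbit of a function `g : ℝ^n → ℝ` under a subgroup `H ≤ S_n`. -/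
def forbitUnder {n : ℕ} (H : Subgroup (Equiv.Perm (Fin n))) (g : (Fin n → ℝ) → ℝ) :
    Set ((Fin n → ℝ) → ℝ) := {h | ∃ σ ∈ H, fsmul σ g = h}

/-- The Lagrange interpolation problem with interpolation space `F` and nodes
`a 1, …, a N` is unisolvent. -/
def Unisolvent {n N : ℕ} (F : Submodule ℝ ((Fin n → ℝ) → ℝ))
    (a : Fin N → (Fin n → ℝ)) : Prop :=
  ∀ b : Fin N → ℝ, ∃! f : F, ∀ i, (f : (Fin n → ℝ) → ℝ) (a i) = b i

/-! ### Auxiliary lemmas -/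

section Aux

lemma psmul_mul {n : ℕ} (σ τ : Equiv.Perm (Fin n)) (x : Fin n → ℝ) :
    psmul (σ * τ) x = psmul σ (psmul τ x) := by
  funext j; simp [psmul, mul_inv_rev]

lemma psmul_one {n : ℕ} (x : Fin n → ℝ) : psmul 1 x = x := by
  funext j; simp [psmul]

lemma fsmul_mul {n : ℕ} (σ τ : Equiv.Perm (Fin n)) (g : (Fin n → ℝ) → ℝ) :
    fsmul (σ * τ) g = fsmul σ (fsmul τ g) := by
  funext x; simp [fsmul, mul_inv_rev, psmul_mul]

lemma fsmul_one {n : ℕ} (g : (Fin n → ℝ) → ℝ) : fsmul 1 g = g := by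
  funext x; simp [fsmul, psmul_one]

/-- Index permutation induced by a self-map `T` preserving the range of an injective
family `u`. -/
noncomputable def indexPermFun {N : ℕ} {α : Type*} (u : Fin N → α) (T : α → α)
    (hmem : ∀ i, T (u i) ∈ Set.range u) : Fin N → Fin N :=
  fun i => (hmem i).choose

lemma indexPermFun_spec {N : ℕ} {α : Type*} (u : Fin N → α) (T : α → α)
    (hmem : ∀ i, T (u i) ∈ Set.range u) (i : Fin N) :
    u (indexPermFun u T hmem i) = T (u i) :=
  (hmem i).choose_spec

lemma indexPermFun_bijective {N : ℕ} {α : Type*} {u : Fin N → α} (hu : Function.Injective u)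
    {T : α → α} (hT : Function.Injective T) (hmem : ∀ i, T (u i) ∈ Set.range u) :
    Function.Bijective (indexPermFun u T hmem) := by
  refine Finite.injective_iff_bijective.mp ?_
  intro i j hij
  apply hu; apply hT
  rw [← indexPermFun_spec u T hmem i, ← indexPermFun_spec u T hmem j, hij]

/-- Trace of an endomorphism which permutes a basis: it equals the number of fixed
basis vectors. -/
lemma trace_of_basis_perm {M : Type*} [AddCommGroup M] [Module ℝ M] {N : ℕ}
    (b : Module.Basis (Fin N) ℝ M) (T : M →ₗ[ℝ] M) (e : Equiv.Perm (Fin N))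
    (h : ∀ i, T (b i) = b (e i)) :
    LinearMap.trace ℝ M T = ((Finset.univ.filter fun i => e i = i).card : ℝ) := by
  rw [LinearMap.trace_eq_matrix_trace ℝ b, Matrix.trace]
  have hdiag : ∀ i, Matrix.diag (LinearMap.toMatrix b b T) i
      = if e i = i then (1 : ℝ) else 0 := by
    intro i
    simp only [Matrix.diag, LinearMap.toMatrix_apply, h i, Module.Basis.repr_self]
    simp [Finsupp.single_apply]
  rw [Finset.sum_congr rfl fun i _ => hdiag i, Finset.sum_boole]

end Aux

section Burnside

open MulAction

variable {G : Type*} [Group G] [Fintype G] {I : Type*} [Fintype I] [DecidableEq I]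

lemma burnside_count (φ : G →* Equiv.Perm I) :
    {S : Set I | ∃ i, S = {j | ∃ g, φ g i = j}}.ncard * Fintype.card G
      = ∑ g : G, (Finset.univ.filter fun i => φ g i = i).card := by
  letI act : MulAction G I := MulAction.compHom I φ
  have hsmul : ∀ (g : G) (i : I), g • i = φ g i := fun g i => rfl
  have horb : ∀ i : I, MulAction.orbit G i = {j | ∃ g, φ g i = j} := by
    intro i; ext j
    simp only [MulAction.mem_orbit_iff, hsmul, Set.mem_setOf_eq]
  have hset : {S : Set I | ∃ i, S = {j | ∃ g, φ g i = j}}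
      = Set.range (orbitRel.Quotient.orbit (G := G) (α := I)) := by
    ext S
    constructor
    · rintro ⟨i, rfl⟩
      exact ⟨Quotient.mk'' i, by rw [orbitRel.Quotient.orbit_mk, horb]⟩
    · rintro ⟨x, rfl⟩
      induction x using Quotient.inductionOn' with
      | h i => exact ⟨i, by rw [orbitRel.Quotient.orbit_mk, horb]⟩
  letI : Fintype (orbitRel.Quotient G I) := Fintype.ofFinite _
  letI : ∀ g : G, Fintype (fixedBy I g) := fun g => Fintype.ofFinite _
  have hb := MulAction.sum_card_fixedBy_eq_card_orbits_mul_card_group G I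
  have hcardfix : ∀ g : G, Fintype.card (fixedBy I g)
      = (Finset.univ.filter fun i => φ g i = i).card := by
    intro g
    rw [← Fintype.card_subtype]
    exact Fintype.card_congr (Equiv.subtypeEquivRight fun i => by
      simp [fixedBy, hsmul])
  rw [hset]
  have hr : Set.range (orbitRel.Quotient.orbit (G := G) (α := I))
      = orbitRel.Quotient.orbit (G := G) (α := I) '' Set.univ := by
    rw [Set.image_univ]
  rw [hr, Set.ncard_image_of_injective _ orbitRel.Quotient.orbit_injective,
    Set.ncard_univ, Nat.card_eq_fintype_card]
  rw [← hb, Finset.sum_congr rfl fun g _ => (hcardfix g).symm]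

lemma ncard_orbits_eq (φ ψ : G →* Equiv.Perm I)
    (h : ∀ g : G, (Finset.univ.filter fun i => φ g i = i).card
        = (Finset.univ.filter fun i => ψ g i = i).card) :
    {S : Set I | ∃ i, S = {j | ∃ g, φ g i = j}}.ncard
      = {S : Set I | ∃ i, S = {j | ∃ g, ψ g i = j}}.ncard := by
  have h1 := burnside_count φ
  have h2 := burnside_count ψ
  rw [Finset.sum_congr rfl fun g _ => h g, ← h2] at h1
  exact Nat.eq_of_mul_eq_mul_right Fintype.card_pos h1

end Burnside

/-- in the symmetric unisolvent setup, for every subgroup `H ≤ S_n` the number of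
`H`-orbits of the basis set `B` equals the number of `H`-orbits of the nodes set `P`. -/
theorem stmt_5 {n N : ℕ} (f : Fin N → ((Fin n → ℝ) → ℝ)) (hf : LinearIndependent ℝ f)
    (hBsym : ∀ σ, ∀ g ∈ Set.range f, fsmul σ g ∈ Set.range f)
    (a : Fin N → (Fin n → ℝ)) (ha : Function.Injective a)
    (hPsym : ∀ σ, ∀ p ∈ Set.range a, psmul σ p ∈ Set.range a)
    (huni : Unisolvent (Submodule.span ℝ (Set.range f)) a) :
    ∀ H : Subgroup (Equiv.Perm (Fin n)),
      {O : Set ((Fin n → ℝ) → ℝ) | ∃ g ∈ Set.range f, O = forbitUnder H g}.ncard =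
      {O : Set (Fin n → ℝ) | ∃ p ∈ Set.range a, O = porbitUnder H p}.ncard := by
  classical
  intro H
  have hfinj : Function.Injective f := hf.injective
  -- injectivity of the actions
  have hpsinj : ∀ σ : Equiv.Perm (Fin n), Function.Injective (psmul (n := n) σ) := by
    intro σ x y hxy
    have h2 := congrArg (psmul σ⁻¹) hxy
    rwa [← psmul_mul, ← psmul_mul, inv_mul_cancel, psmul_one, psmul_one] at h2
  have hfsinj : ∀ σ : Equiv.Perm (Fin n), Function.Injective (fsmul (n := n) σ) := by
    intro σ x y hxy
    have h2 := congrArg (fsmul σ⁻¹) hxy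
    rwa [← fsmul_mul, ← fsmul_mul, inv_mul_cancel, fsmul_one, fsmul_one] at h2
  -- the index permutations
  have hmemf : ∀ σ : Equiv.Perm (Fin n), ∀ i, fsmul σ (f i) ∈ Set.range f :=
    fun σ i => hBsym σ _ ⟨i, rfl⟩
  have hmema : ∀ σ : Equiv.Perm (Fin n), ∀ i, psmul σ (a i) ∈ Set.range a :=
    fun σ i => hPsym σ _ ⟨i, rfl⟩
  let efF : Equiv.Perm (Fin n) → Equiv.Perm (Fin N) := fun σ =>
    Equiv.ofBijective _ (indexPermFun_bijective hfinj (hfsinj σ) (hmemf σ))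
  have efF_spec : ∀ σ i, f (efF σ i) = fsmul σ (f i) := fun σ i =>
    indexPermFun_spec f (fsmul σ) (hmemf σ) i
  let eaF : Equiv.Perm (Fin n) → Equiv.Perm (Fin N) := fun σ =>
    Equiv.ofBijective _ (indexPermFun_bijective ha (hpsinj σ) (hmema σ))
  have eaF_spec : ∀ σ i, a (eaF σ i) = psmul σ (a i) := fun σ i =>
    indexPermFun_spec a (psmul σ) (hmema σ) i
  let ef : Equiv.Perm (Fin n) →* Equiv.Perm (Fin N) := MonoidHom.mk' efF (by
    intro σ τ
    refine Equiv.ext fun i => ?_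
    apply hfinj
    rw [Equiv.Perm.mul_apply, efF_spec, efF_spec, efF_spec, fsmul_mul])
  let ea : Equiv.Perm (Fin n) →* Equiv.Perm (Fin N) := MonoidHom.mk' eaF (by
    intro σ τ
    refine Equiv.ext fun i => ?_
    apply ha
    rw [Equiv.Perm.mul_apply, eaF_spec, eaF_spec, eaF_spec, psmul_mul])
  have ef_spec : ∀ σ i, f (ef σ i) = fsmul σ (f i) := efF_spec
  have ea_spec : ∀ σ i, a (ea σ i) = psmul σ (a i) := eaF_spec
  -- the interpolation space and its two bases
  set F := Submodule.span ℝ (Set.range f) with hFdef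
  let bB : Module.Basis (Fin N) ℝ F := Module.Basis.span hf
  let E : F →ₗ[ℝ] (Fin N → ℝ) :=
    { toFun := fun g i => (g : (Fin n → ℝ) → ℝ) (a i)
      map_add' := fun g h => rfl
      map_smul' := fun c g => rfl }
  have hEinj : Function.Injective E := by
    intro g₁ g₂ hg
    obtain ⟨w, hw, huniq⟩ := huni (E g₁)
    have h1 : g₁ = w := huniq g₁ fun i => rfl
    have h2 : g₂ = w := huniq g₂ fun i => (congrFun hg i).symm
    rw [h1, h2]
  have hEsurj : Function.Surjective E := by
    intro b
    obtain ⟨w, hw, -⟩ := huni b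
    exact ⟨w, funext hw⟩
  let Eq := LinearEquiv.ofBijective E ⟨hEinj, hEsurj⟩
  let L : Module.Basis (Fin N) ℝ F := (Pi.basisFun ℝ (Fin N)).map Eq.symm
  have hL : ∀ i, E (L i) = Pi.single i 1 := by
    intro i
    show Eq (L i) = Pi.single i 1
    rw [Module.Basis.map_apply, LinearEquiv.apply_symm_apply, Pi.basisFun_apply]
  -- the action as a linear endomorphism of F
  let Tlin : Equiv.Perm (Fin n) → ((Fin n → ℝ) → ℝ) →ₗ[ℝ] ((Fin n → ℝ) → ℝ) := fun σ =>
    { toFun := fsmul σ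
      map_add' := fun g h => rfl
      map_smul' := fun c g => rfl }
  have hinv : ∀ σ, ∀ x ∈ F, Tlin σ x ∈ F := by
    intro σ
    have hle : F.map (Tlin σ) ≤ F := by
      rw [hFdef, Submodule.map_span, Submodule.span_le]
      rintro y ⟨g, ⟨i, rfl⟩, rfl⟩
      exact Submodule.subset_span (hBsym σ _ ⟨i, rfl⟩)
    intro x hx
    exact hle (Submodule.mem_map_of_mem hx)
  let T : Equiv.Perm (Fin n) → (F →ₗ[ℝ] F) := fun σ => (Tlin σ).restrict (hinv σ)
  have hTB : ∀ σ i, T σ (bB i) = bB (ef σ i) := by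
    intro σ i
    apply Subtype.ext
    show Tlin σ (bB i : (Fin n → ℝ) → ℝ) = (bB (ef σ i) : (Fin n → ℝ) → ℝ)
    show fsmul σ (bB i : (Fin n → ℝ) → ℝ) = (bB (ef σ i) : (Fin n → ℝ) → ℝ)
    rw [Module.Basis.span_apply, Module.Basis.span_apply, ← ef_spec]
  have hTL : ∀ σ i, T σ (L i) = L (ea σ i) := by
    intro σ i
    apply hEinj
    funext j
    have lhs : E (T σ (L i)) j = (L i : (Fin n → ℝ) → ℝ) (psmul σ⁻¹ (a j)) := rfl
    rw [lhs]
    have h1 : psmul σ⁻¹ (a j) = a (ea σ⁻¹ j) := (ea_spec σ⁻¹ j).symm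
    rw [h1]
    have h2 : (L i : (Fin n → ℝ) → ℝ) (a (ea σ⁻¹ j)) = E (L i) (ea σ⁻¹ j) := rfl
    rw [h2, hL i, hL (ea σ i)]
    have h3 : ea σ⁻¹ j = (ea σ)⁻¹ j := by rw [map_inv]
    rw [h3]
    rw [Pi.single_apply, Pi.single_apply]
    congr 1
    simp only [eq_iff_iff]
    constructor
    · intro hh; rw [← hh, Equiv.Perm.coe_inv, Equiv.apply_symm_apply]
    · intro hh; rw [hh, Equiv.Perm.coe_inv, Equiv.symm_apply_apply]
  -- equality of fixed point counts via traces
  have hfix : ∀ σ : Equiv.Perm (Fin n),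
      (Finset.univ.filter fun i => ef σ i = i).card
        = (Finset.univ.filter fun i => ea σ i = i).card := by
    intro σ
    have t1 := trace_of_basis_perm bB (T σ) (ef σ) (hTB σ)
    have t2 := trace_of_basis_perm L (T σ) (ea σ) (hTL σ)
    exact_mod_cast t1.symm.trans t2
  -- restrict to the subgroup H
  letI : Fintype H := Fintype.ofFinite H
  let efH : H →* Equiv.Perm (Fin N) := ef.comp H.subtype
  let eaH : H →* Equiv.Perm (Fin N) := ea.comp H.subtype
  have key := ncard_orbits_eq efH eaH (fun g => hfix (g : Equiv.Perm (Fin n)))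
  -- identify the orbit collections
  have himgf : {O : Set ((Fin n → ℝ) → ℝ) | ∃ g ∈ Set.range f, O = forbitUnder H g}
      = (Set.image f) '' {S : Set (Fin N) | ∃ i, S = {j | ∃ g : H, efH g i = j}} := by
    ext O
    constructor
    · rintro ⟨g, ⟨i, rfl⟩, rfl⟩
      refine ⟨{j | ∃ g : H, efH g i = j}, ⟨i, rfl⟩, ?_⟩
      ext h
      constructor
      · rintro ⟨j, ⟨g, rfl⟩, rfl⟩
        exact ⟨(g : Equiv.Perm (Fin n)), g.2, (ef_spec _ i).symm⟩
      · rintro ⟨σ, hσ, rfl⟩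
        exact ⟨ef σ i, ⟨⟨σ, hσ⟩, rfl⟩, ef_spec σ i⟩
    · rintro ⟨S, ⟨i, rfl⟩, rfl⟩
      refine ⟨f i, ⟨i, rfl⟩, ?_⟩
      ext h
      constructor
      · rintro ⟨j, ⟨g, rfl⟩, rfl⟩
        exact ⟨(g : Equiv.Perm (Fin n)), g.2, (ef_spec _ i).symm⟩
      · rintro ⟨σ, hσ, rfl⟩
        exact ⟨ef σ i, ⟨⟨σ, hσ⟩, rfl⟩, ef_spec σ i⟩
  have himga : {O : Set (Fin n → ℝ) | ∃ p ∈ Set.range a, O = porbitUnder H p}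
      = (Set.image a) '' {S : Set (Fin N) | ∃ i, S = {j | ∃ g : H, eaH g i = j}} := by
    ext O
    constructor
    · rintro ⟨p, ⟨i, rfl⟩, rfl⟩
      refine ⟨{j | ∃ g : H, eaH g i = j}, ⟨i, rfl⟩, ?_⟩
      ext y
      constructor
      · rintro ⟨j, ⟨g, rfl⟩, rfl⟩
        exact ⟨(g : Equiv.Perm (Fin n)), g.2, (ea_spec _ i).symm⟩
      · rintro ⟨σ, hσ, rfl⟩
        exact ⟨ea σ i, ⟨⟨σ, hσ⟩, rfl⟩, ea_spec σ i⟩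
    · rintro ⟨S, ⟨i, rfl⟩, rfl⟩
      refine ⟨a i, ⟨i, rfl⟩, ?_⟩
      ext y
      constructor
      · rintro ⟨j, ⟨g, rfl⟩, rfl⟩
        exact ⟨(g : Equiv.Perm (Fin n)), g.2, (ea_spec _ i).symm⟩
      · rintro ⟨σ, hσ, rfl⟩
        exact ⟨ea σ i, ⟨⟨σ, hσ⟩, rfl⟩, ea_spec σ i⟩
  rw [himgf, himga,
    Set.ncard_image_of_injective _ (Set.image_injective.mpr hfinj),
    Set.ncard_image_of_injective _ (Set.image_injective.mpr ha)]
  exact key
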